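/- arXiv:2003.06213 — 2 statements merged into one kernel-verified Lean document; each statement's English description precedes it below -/
import Mathlib

section
/- In the Maximin UCB algorithm, if the good event G_i holds — namely (a) μ_1 < UCB_1(t) for all rounds t ∈ [n], and (b) min_{j∈[p]} μ̂_{ij}^{(u_i)} + √(2σ²log(1/δ)/u_i) < μ_1 — then the number of times suboptimal channel i is selected satisfies T_i(n) ≤ u_i. -/
open MeasureTheory ProbabilityTheory Real

/-- In the Maximin UCB algorithm, if the good event `G_i` holds — (a) the optimal
channel's UCB index never underestimates `μ₁` in any round `t ∈ [n]`, and (b) the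
UCB index of channel `i` based on `u` samples is below `μ₁` — then channel `i` is
selected at most `u` times in `n` rounds. -/
theorem stmt3 (n m p : ℕ) [NeZero p] (hm : 0 < m) (σ δ : ℝ)
    (μhat : Fin m → Fin p → ℕ → ℝ)       -- empirical means from `s` samples
    (μ1 : ℝ)                              -- maximin value of the optimal channel
    (I : ℕ → Fin m)                       -- channel selected in each round
    (T : Fin m → ℕ → ℕ)                   -- selection counts
    (hT : ∀ k t, T k t = ((Finset.Icc 1 t).filter (fun s => I s = k)).card)
    (UCB : Fin m → ℕ → ℝ)
    (hUCB : ∀ k t, UCB k t = (⨅ j, μhat k j (T k (t - 1))) +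
      Real.sqrt (2 * σ ^ 2 * Real.log (1 / δ) / (T k (t - 1))))
    (one : Fin m)                         -- the maximin optimal channel
    (hsel : ∀ t, m < t → t ≤ n → ∀ k, UCB k t ≤ UCB (I t) t)
    (i : Fin m) (u : ℕ) (hu1 : 1 ≤ u) (hun : u ≤ n)
    (hinit : T i m = 1)                   -- each channel pulled once initially
    (hG1 : ∀ t, 1 ≤ t → t ≤ n → μ1 < UCB one t)
    (hG2 : (⨅ j, μhat i j u) + Real.sqrt (2 * σ ^ 2 * Real.log (1 / δ) / u) < μ1) :
    T i n ≤ u := by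
  by_contra h
  push_neg at h
  have mono : ∀ s s', s ≤ s' → T i s ≤ T i s' := by
    intro s s' hss
    rw [hT, hT]
    exact Finset.card_le_card
      (Finset.filter_subset_filter _ (Finset.Icc_subset_Icc_right hss))
  have hex : ∃ t, u + 1 ≤ T i t := ⟨n, h⟩
  set t := Nat.find hex with ht
  have hPt : u + 1 ≤ T i t := Nat.find_spec hex
  have htn : t ≤ n := Nat.find_min' hex h
  have hmt : m < t := by
    by_contra hmt
    push_neg at hmt
    have := mono t m hmt
    omega
  have ht1 : 1 ≤ t := by omega
  have hprev : T i (t - 1) ≤ u := by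
    have := Nat.find_min hex (show t - 1 < t by omega)
    omega
  have hsplit : Finset.Icc 1 t = insert t (Finset.Icc 1 (t - 1)) := by
    ext s; simp only [Finset.mem_Icc, Finset.mem_insert]; omega
  have hIt : I t = i := by
    by_contra hne
    have : T i t = T i (t - 1) := by
      rw [hT, hT, hsplit, Finset.filter_insert, if_neg hne]
    omega
  have hTeq : T i (t - 1) = u := by
    have : T i t ≤ T i (t - 1) + 1 := by
      rw [hT, hT, hsplit, Finset.filter_insert, if_pos hIt]
      exact le_trans (Finset.card_insert_le _ _) (by omega)
    omega
  have e1 : UCB i t = (⨅ j, μhat i j u) +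
      Real.sqrt (2 * σ ^ 2 * Real.log (1 / δ) / u) := by
    rw [hUCB, hTeq]
  have h2 : μ1 < UCB one t := hG1 t ht1 htn
  have h3 : UCB one t ≤ UCB (I t) t := hsel t hmt htn one
  rw [hIt] at h3
  rw [e1] at h3
  linarith
end

section
/- (Problem-independent regret bound) If for every channel i with gap Δ_i > 0 one has E[T_i(n)] ≤ 3 + 16σ²log(n)/Δ_i², and ∑_{i=1}^m T_i(n) = n, then the regret R_n = ∑_i Δ_i E[T_i(n)] satisfies R_n ≤ 8√(n·m·σ²·log(n)) + 3∑_{i=1}^m Δ_i. -/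
open Real

/-- Theorem 2 (problem-independent regret bound): if each suboptimal channel
satisfies `E[Tᵢ(n)] ≤ 3 + 16σ² log(n)/Δᵢ²` and the expected counts sum to `n`,
then `R_n = ∑ᵢ Δᵢ E[Tᵢ(n)] ≤ 8√(n m σ² log n) + 3 ∑ᵢ Δᵢ`. -/
theorem stmt9 (m n : ℕ) (hm : 0 < m) (hn : 1 ≤ n) (σ : ℝ) (hσ : 0 < σ)
    (Δ : Fin m → ℝ) (hΔ : ∀ i, 0 ≤ Δ i)
    (ET : Fin m → ℝ) (hET0 : ∀ i, 0 ≤ ET i)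
    (hsum : ∑ i, ET i = (n : ℝ))
    (hETb : ∀ i, 0 < Δ i → ET i ≤ 3 + 16 * σ ^ 2 * Real.log n / (Δ i) ^ 2) :
    ∑ i, Δ i * ET i ≤ 8 * Real.sqrt ((n : ℝ) * m * σ ^ 2 * Real.log n) + 3 * ∑ i, Δ i := by
  have hn1 : (1 : ℝ) ≤ (n : ℝ) := by exact_mod_cast hn
  have hnpos : (0 : ℝ) < (n : ℝ) := by linarith
  have hL0 : 0 ≤ Real.log n := Real.log_nonneg hn1
  set L := Real.log n with hLdef
  rcases eq_or_lt_of_le hL0 with hL | hL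
  · -- log n = 0 case
    have key : ∀ i, Δ i * ET i ≤ 3 * Δ i := by
      intro i
      rcases eq_or_lt_of_le (hΔ i) with h0 | h0
      · rw [← h0]; ring_nf; simp
      · have hb := hETb i h0
        rw [← hL] at hb
        simp at hb
        nlinarith
    have h1 : ∑ i, Δ i * ET i ≤ 3 * ∑ i, Δ i := by
      rw [Finset.mul_sum]
      exact Finset.sum_le_sum fun i _ => key i
    have h2 : 0 ≤ 8 * Real.sqrt ((n : ℝ) * m * σ ^ 2 * L) := by positivity
    linarith
  · -- log n > 0 case
    have hmpos : (0 : ℝ) < (m : ℝ) := by exact_mod_cast hm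
    set D := Real.sqrt (16 * m * σ ^ 2 * L / n) with hDdef
    have hD : 0 < D := Real.sqrt_pos.2 (by positivity)
    have hD2 : D ^ 2 = 16 * m * σ ^ 2 * L / n := Real.sq_sqrt (by positivity)
    have key : ∀ i, Δ i * ET i ≤ D * ET i + (3 * Δ i + 16 * σ ^ 2 * L / D) := by
      intro i
      rcases lt_or_ge (Δ i) D with h | h
      · have h1 : Δ i * ET i ≤ D * ET i := mul_le_mul_of_nonneg_right h.le (hET0 i)
        have h2 : (0:ℝ) ≤ 3 * Δ i + 16 * σ ^ 2 * L / D :=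
          add_nonneg (mul_nonneg (by norm_num) (hΔ i)) (by positivity)
        linarith
      · have hΔi : 0 < Δ i := lt_of_lt_of_le hD h
        have hb := hETb i hΔi
        have h1 : Δ i * ET i ≤ Δ i * (3 + 16 * σ ^ 2 * L / (Δ i) ^ 2) :=
          mul_le_mul_of_nonneg_left hb hΔi.le
        have h2 : Δ i * (3 + 16 * σ ^ 2 * L / (Δ i) ^ 2) = 3 * Δ i + 16 * σ ^ 2 * L / Δ i := by
          field_simp
        have h3 : 16 * σ ^ 2 * L / Δ i ≤ 16 * σ ^ 2 * L / D := by
          gcongr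
        have h4 : 0 ≤ D * ET i := mul_nonneg hD.le (hET0 i)
        linarith
    have hsum2 : ∑ i, Δ i * ET i ≤ D * n + (3 * ∑ i, Δ i + m * (16 * σ ^ 2 * L / D)) := by
      calc ∑ i, Δ i * ET i ≤ ∑ i, (D * ET i + (3 * Δ i + 16 * σ ^ 2 * L / D)) :=
            Finset.sum_le_sum fun i _ => key i
        _ = D * ∑ i, ET i + (3 * ∑ i, Δ i + m * (16 * σ ^ 2 * L / D)) := by
            rw [Finset.sum_add_distrib, Finset.sum_add_distrib, ← Finset.mul_sum,
              ← Finset.mul_sum, Finset.sum_const, Finset.card_univ, Fintype.card_fin,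
              nsmul_eq_mul]
        _ = D * n + (3 * ∑ i, Δ i + m * (16 * σ ^ 2 * L / D)) := by rw [hsum]
    have hC : m * (16 * σ ^ 2 * L / D) = D * n := by
      have hDn : D ≠ 0 := ne_of_gt hD
      have hnn : (n:ℝ) ≠ 0 := ne_of_gt hnpos
      have hD2' : D ^ 2 * n = 16 * m * σ ^ 2 * L := by
        rw [hD2]; field_simp
      field_simp
      linear_combination -hD2'
    have hS : (0:ℝ) ≤ (n : ℝ) * m * σ ^ 2 * L := by positivity
    have hsq := Real.sq_sqrt hS
    have hsn := Real.sqrt_nonneg ((n : ℝ) * m * σ ^ 2 * L)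
    have hD2' : D ^ 2 * n = 16 * m * σ ^ 2 * L := by
      rw [hD2]; field_simp
    have hab : (2 * (D * (n:ℝ))) ^ 2 = (8 * Real.sqrt ((n : ℝ) * m * σ ^ 2 * L)) ^ 2 := by
      rw [mul_pow (8:ℝ), hsq]
      linear_combination (4 * (n:ℝ)) * hD2'
    have hfin : 2 * (D * n) ≤ 8 * Real.sqrt ((n : ℝ) * m * σ ^ 2 * L) := by
      nlinarith [hab, hsn, mul_nonneg hD.le hnpos.le]
    linarith [hsum2, hC, hfin]
end
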